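/- For every m ≥ 1, the pattern 12^m (the symbol 1 followed by m copies of 2) is equivalent to the pattern 121^{m−1} (the symbols 1, 2 followed by m−1 copies of 1). -/

import Mathlib

/-- `π` is the canonical sequence of a set partition: every entry is at least 1,
and each entry is at most one more than the maximum of the preceding entries
(so the first entry is 1). -/
def IsCanonicalSeq (π : List ℕ) : Prop :=
  ∀ i (h : i < π.length), 1 ≤ π.get ⟨i, h⟩ ∧ π.get ⟨i, h⟩ ≤ (π.take i).foldr max 0 + 1

/-- `π` contains the pattern `σ`: there is a subsequence of `π`
order-isomorphic to `σ`. -/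
def ContainsPat (π σ : List ℕ) : Prop :=
  ∃ f : Fin σ.length → Fin π.length, StrictMono f ∧
    ∀ i j : Fin σ.length, σ.get i < σ.get j ↔ π.get (f i) < π.get (f j)

/-- `π` avoids the pattern `σ`. -/
def AvoidsPat (π σ : List ℕ) : Prop := ¬ ContainsPat π σ

/-- `pAvoid n σ` is the number of canonical sequences of partitions of `[n]`
avoiding the pattern `σ`. -/
noncomputable def pAvoid (n : ℕ) (σ : List ℕ) : ℕ :=
  Set.ncard {π : List ℕ | π.length = n ∧ IsCanonicalSeq π ∧ AvoidsPat π σ}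

/-- Two patterns are equivalent if they have the same number of avoiders of
each size. -/
def PatEquiv (σ σ' : List ℕ) : Prop := ∀ n, pAvoid n σ = pAvoid n σ'

/-- The increasing sequence `1, 2, …, k`. -/
def iota (k : ℕ) : List ℕ := (List.range k).map (· + 1)


namespace S9

/-- canonical-sequence predicate with running max accumulator -/
def CanonA : ℕ → List ℕ → Prop
  | _, [] => True
  | M, a :: l => 1 ≤ a ∧ a ≤ M + 1 ∧ CanonA (max M a) l

/-- the bijection, with running max accumulator -/
def phiA : ℕ → List ℕ → List ℕ
  | _, [] => []
  | M, a :: l => (if a = M + 1 then M + 1 else if a = M then 1 else a + 1) :: phiA (max M a) l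

/-- the inverse bijection -/
def psiA : ℕ → List ℕ → List ℕ
  | _, [] => []
  | M, a :: l => (if a = M + 1 then M + 1 else if a = 1 then M else a - 1) :: psiA (max M a) l

/-- number of "late" occurrences of `a` -/
def lateCt : ℕ → ℕ → List ℕ → ℕ
  | _, _, [] => 0
  | M, a, c :: l => (if c = a ∧ a < M then 1 else 0) + lateCt (max M c) a l

theorem canonA_cons {M a : ℕ} {l : List ℕ} :
    CanonA M (a :: l) ↔ 1 ≤ a ∧ a ≤ M + 1 ∧ CanonA (max M a) l := Iff.rfl

theorem phiA_cons (M a : ℕ) (l : List ℕ) :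
    phiA M (a :: l) =
      (if a = M + 1 then M + 1 else if a = M then 1 else a + 1) :: phiA (max M a) l := rfl

theorem psiA_cons (M a : ℕ) (l : List ℕ) :
    psiA M (a :: l) =
      (if a = M + 1 then M + 1 else if a = 1 then M else a - 1) :: psiA (max M a) l := rfl

theorem lateCt_cons (M a c : ℕ) (l : List ℕ) :
    lateCt M a (c :: l) = (if c = a ∧ a < M then 1 else 0) + lateCt (max M c) a l := rfl

theorem canonA_iff_aux (π : List ℕ) : ∀ M : ℕ,
    (∀ i (h : i < π.length), 1 ≤ π.get ⟨i, h⟩ ∧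
      π.get ⟨i, h⟩ ≤ max M ((π.take i).foldr max 0) + 1) ↔ CanonA M π := by
  induction π with
  | nil => intro M; simp [CanonA]
  | cons a l ih =>
    intro M
    constructor
    · intro h
      have h0 := h 0 (by simp)
      simp at h0
      refine ⟨h0.1, by omega, ?_⟩
      rw [← ih (max M a)]
      intro i hi
      have := h (i + 1) (by simpa using Nat.succ_lt_succ hi)
      simpa [Nat.max_assoc] using this
    · rintro ⟨h1, h2, h3⟩
      intro i hi
      match i with
      | 0 => simpa using ⟨h1, by omega⟩
      | Nat.succ j =>
        have hj : j < l.length := by simpa using hi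
        have := (ih (max M a)).mpr h3 j hj
        simpa [Nat.max_assoc] using this

theorem isCanonical_iff (π : List ℕ) : IsCanonicalSeq π ↔ CanonA 0 π := by
  rw [← canonA_iff_aux]
  unfold IsCanonicalSeq
  constructor <;> intro h i hi <;> have := h i hi <;> omega

theorem phiA_length (π : List ℕ) : ∀ M, (phiA M π).length = π.length := by
  induction π with
  | nil => intro M; rfl
  | cons a l ih => intro M; rw [phiA_cons]; simp [ih]

theorem psiA_length (π : List ℕ) : ∀ M, (psiA M π).length = π.length := by
  induction π with
  | nil => intro M; rfl
  | cons a l ih => intro M; rw [psiA_cons]; simp [ih]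

theorem phiA_canon (π : List ℕ) : ∀ M, CanonA M π → CanonA M (phiA M π) := by
  induction π with
  | nil => intro M _; trivial
  | cons a l ih =>
    intro M hc
    rw [canonA_cons] at hc
    obtain ⟨h1, h2, h3⟩ := hc
    rw [phiA_cons, canonA_cons]
    rcases Nat.lt_trichotomy a M with hlt | he | hgt
    · have e1 : a ≠ M + 1 := by omega
      have e2 : a ≠ M := by omega
      rw [if_neg e1, if_neg e2]
      have hm1 : max M a = M := by omega
      have hm2 : max M (a + 1) = M := by omega
      rw [hm1] at h3 ⊢
      exact ⟨by omega, by omega, by rw [hm2]; exact ih M h3⟩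
    · subst he
      have e1 : a ≠ a + 1 := by omega
      rw [if_neg e1, if_pos rfl]
      have hm1 : max a a = a := by omega
      have hm2 : max a 1 = a := by omega
      rw [hm1] at h3 ⊢
      exact ⟨le_refl 1, by omega, by rw [hm2]; exact ih a h3⟩
    · have e1 : a = M + 1 := by omega
      subst e1
      rw [if_pos rfl]
      have hm : max M (M + 1) = M + 1 := by omega
      rw [hm] at h3
      exact ⟨by omega, le_refl _, by rw [hm]; exact ih (M + 1) h3⟩

theorem psiA_canon (π : List ℕ) : ∀ M, CanonA M π → CanonA M (psiA M π) := by
  induction π with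
  | nil => intro M _; trivial
  | cons a l ih =>
    intro M hc
    rw [canonA_cons] at hc
    obtain ⟨h1, h2, h3⟩ := hc
    rw [psiA_cons, canonA_cons]
    by_cases e1 : a = M + 1
    · subst e1
      rw [if_pos rfl]
      have hm : max M (M + 1) = M + 1 := by omega
      rw [hm] at h3
      exact ⟨by omega, le_refl _, by rw [hm]; exact ih (M + 1) h3⟩
    · have haM : a ≤ M := by omega
      have hm1 : max M a = M := by omega
      rw [hm1] at h3
      rw [hm1, if_neg e1]
      by_cases e2 : a = 1
      · rw [if_pos e2]
        have hM1 : 1 ≤ M := by omega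
        have hm2 : max M M = M := by omega
        exact ⟨by omega, by omega, by rw [hm2]; exact ih M h3⟩
      · rw [if_neg e2]
        have hm2 : max M (a - 1) = M := by omega
        exact ⟨by omega, by omega, by rw [hm2]; exact ih M h3⟩

theorem psiA_phiA (π : List ℕ) : ∀ M, CanonA M π → psiA M (phiA M π) = π := by
  induction π with
  | nil => intro M _; rfl
  | cons a l ih =>
    intro M hc
    rw [canonA_cons] at hc
    obtain ⟨h1, h2, h3⟩ := hc
    rw [phiA_cons]
    rcases Nat.lt_trichotomy a M with hlt | he | hgt
    · have e1 : a ≠ M + 1 := by omega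
      have e2 : a ≠ M := by omega
      rw [if_neg e1, if_neg e2, psiA_cons]
      have f1 : a + 1 ≠ M + 1 := by omega
      have f2 : a + 1 ≠ 1 := by omega
      rw [if_neg f1, if_neg f2]
      have hm1 : max M a = M := by omega
      have hm2 : max M (a + 1) = M := by omega
      rw [hm1] at h3 ⊢
      rw [hm2, ih M h3]
      simp
    · subst he
      have e1 : a ≠ a + 1 := by omega
      rw [if_neg e1, if_pos rfl, psiA_cons]
      have f1 : (1 : ℕ) ≠ a + 1 := by omega
      rw [if_neg f1, if_pos rfl]
      have hm1 : max a a = a := by omega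
      have hm2 : max a 1 = a := by omega
      rw [hm1] at h3 ⊢
      rw [hm2, ih a h3]
    · have e1 : a = M + 1 := by omega
      subst e1
      rw [if_pos rfl, psiA_cons, if_pos rfl]
      have hm : max M (M + 1) = M + 1 := by omega
      rw [hm] at h3
      rw [hm, ih (M + 1) h3]

theorem phiA_psiA (π : List ℕ) : ∀ M, CanonA M π → phiA M (psiA M π) = π := by
  induction π with
  | nil => intro M _; rfl
  | cons a l ih =>
    intro M hc
    rw [canonA_cons] at hc
    obtain ⟨h1, h2, h3⟩ := hc
    rw [psiA_cons]
    by_cases e1 : a = M + 1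
    · subst e1
      rw [if_pos rfl, phiA_cons, if_pos rfl]
      have hm : max M (M + 1) = M + 1 := by omega
      rw [hm] at h3
      rw [hm, ih (M + 1) h3]
    · have haM : a ≤ M := by omega
      have hm1 : max M a = M := by omega
      rw [hm1] at h3
      rw [hm1, if_neg e1]
      by_cases e2 : a = 1
      · subst e2
        have hM1 : 1 ≤ M := by omega
        rw [if_pos rfl, phiA_cons]
        have f1 : M ≠ M + 1 := by omega
        rw [if_neg f1, if_pos rfl]
        have hm2 : max M M = M := by omega
        rw [hm2, ih M h3]
      · rw [if_neg e2, phiA_cons]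
        have f1 : a - 1 ≠ M + 1 := by omega
        have f2 : a - 1 ≠ M := by omega
        rw [if_neg f1, if_neg f2]
        have hm2 : max M (a - 1) = M := by omega
        have f3 : a - 1 + 1 = a := by omega
        rw [hm2, f3, ih M h3]

theorem le_foldl_max (π : List ℕ) : ∀ M : ℕ, M ≤ π.foldl max M := by
  induction π with
  | nil => intro M; exact le_refl M
  | cons c l ih => intro M; exact le_trans (le_max_left M c) (ih (max M c))

theorem lateCt_le_count (π : List ℕ) (a : ℕ) : ∀ M, lateCt M a π ≤ π.count a := by
  induction π with
  | nil => intro M; exact Nat.le_refl 0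
  | cons c l ih =>
    intro M
    rw [lateCt_cons]
    simp only [List.count_cons, beq_iff_eq]
    have := ih (max M c)
    split_ifs with h1 h2 h2 <;> omega

theorem lateCt_eq_zero (π : List ℕ) : ∀ M, π.foldl max M ≤ a → lateCt M a π = 0 := by
  induction π with
  | nil => intro M _; rfl
  | cons c l ih =>
    intro M hM
    rw [lateCt_cons]
    have h1 : max M c ≤ l.foldl max (max M c) := le_foldl_max l (max M c)
    have h2 : l.foldl max (max M c) ≤ a := hM
    rw [ih (max M c) h2]
    have : ¬ (c = a ∧ a < M) := by omega
    rw [if_neg this]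

theorem canon_mem_ge_one (π : List ℕ) : ∀ M, CanonA M π → ∀ x ∈ π, 1 ≤ x := by
  induction π with
  | nil => intro M _ x hx; simp at hx
  | cons c l ih =>
    intro M hc x hx
    rw [canonA_cons] at hc
    rcases List.mem_cons.mp hx with h | h
    · omega
    · exact ih (max M c) hc.2.2 x h

theorem canon_count_zero (π : List ℕ) (M : ℕ) (hc : CanonA M π) : π.count 0 = 0 := by
  rw [List.count_eq_zero]
  intro h0
  exact absurd (canon_mem_ge_one π M hc 0 h0) (by omega)

theorem rep_late (x : ℕ) : ∀ (π : List ℕ) (r M : ℕ), x < M →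
    (List.replicate r x).Sublist π → r ≤ lateCt M x π := by
  intro π
  induction π with
  | nil =>
    intro r M _ h
    have := h.length_le
    simp at this
    omega
  | cons c l ih =>
    intro r M hx h
    match r with
    | 0 => exact Nat.zero_le _
    | Nat.succ r =>
      rw [List.replicate_succ] at h
      cases h with
      | cons _ h' =>
        rw [← List.replicate_succ] at h'
        have := ih (r + 1) (max M c) (lt_of_lt_of_le hx (le_max_left M c)) h'
        rw [lateCt_cons]
        omega
      | cons_cons _ h' =>
        have := ih r (max M x) (lt_of_lt_of_le hx (le_max_left M x)) h'
        rw [lateCt_cons, if_pos ⟨rfl, hx⟩]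
        omega

theorem y_rep_late (r x y : ℕ) (hxy : x < y) : ∀ (π : List ℕ) (M : ℕ),
    (y :: List.replicate r x).Sublist π → r ≤ lateCt M x π := by
  intro π
  induction π with
  | nil => intro M h; exact absurd (List.eq_nil_of_sublist_nil h) (by simp)
  | cons c l ih =>
    intro M h
    cases h with
    | cons _ h' =>
      have := ih (max M c) h'
      rw [lateCt_cons]; omega
    | cons_cons _ h' =>
      have := rep_late x l r (max M y) (lt_of_lt_of_le hxy (le_max_right M y)) h'
      rw [lateCt_cons]; omega

theorem B_sub_late (r x y : ℕ) (hxy : x < y) : ∀ (π : List ℕ) (M : ℕ),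
    (x :: y :: List.replicate r x).Sublist π → r ≤ lateCt M x π := by
  intro π
  induction π with
  | nil => intro M h; exact absurd (List.eq_nil_of_sublist_nil h) (by simp)
  | cons c l ih =>
    intro M h
    cases h with
    | cons _ h' =>
      have := ih (max M c) h'
      rw [lateCt_cons]; omega
    | cons_cons _ h' =>
      have := y_rep_late r x y hxy l (max M x) h'
      rw [lateCt_cons]; omega

theorem lemC (r a : ℕ) (hr : 1 ≤ r) : ∀ (l : List ℕ), CanonA a l → r ≤ lateCt a a l →
    ∃ y, a < y ∧ (y :: List.replicate r a).Sublist l := by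
  intro l
  induction l with
  | nil => intro _ h; simp [lateCt] at h; omega
  | cons c t ih =>
    intro hc hl
    rw [canonA_cons] at hc
    obtain ⟨h1, h2, h3⟩ := hc
    rw [lateCt_cons] at hl
    have hind : ¬ (c = a ∧ a < a) := by omega
    rw [if_neg hind, Nat.zero_add] at hl
    by_cases hca : c ≤ a
    · have hm : max a c = a := by omega
      rw [hm] at h3 hl
      obtain ⟨y, hy, hsub⟩ := ih h3 (by omega)
      exact ⟨y, hy, hsub.cons c⟩
    · have hc1 : c = a + 1 := by omega
      subst hc1
      have hm : max a (a + 1) = a + 1 := by omega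
      rw [hm] at h3 hl
      have hcount : r ≤ t.count a := le_trans (by omega) (lateCt_le_count t a (a + 1))
      have hrep : (List.replicate r a).Sublist t := List.replicate_sublist_iff.mpr hcount
      exact ⟨a + 1, by omega, hrep.cons₂ (a + 1)⟩

theorem mainB (r a : ℕ) (hr : 1 ≤ r) : ∀ (π : List ℕ) (M : ℕ), CanonA M π → M < a →
    r ≤ lateCt M a π → ∃ y, a < y ∧ (a :: y :: List.replicate r a).Sublist π := by
  intro π
  induction π with
  | nil => intro M _ _ h; simp [lateCt] at h; omega
  | cons c l ih =>
    intro M hc hMa hl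
    rw [canonA_cons] at hc
    obtain ⟨h1, h2, h3⟩ := hc
    rw [lateCt_cons] at hl
    have hind : ¬ (c = a ∧ a < M) := by omega
    rw [if_neg hind, Nat.zero_add] at hl
    by_cases hca : c < a
    · have hm : max M c < a := by omega
      obtain ⟨y, hy, hsub⟩ := ih (max M c) h3 hm hl
      exact ⟨y, hy, hsub.cons c⟩
    · have hc1 : c = a := by omega
      subst hc1
      have ha : c = M + 1 := by omega
      have hm : max M c = c := by omega
      rw [hm] at h3 hl
      obtain ⟨y, hy, hsub⟩ := lemC r c hr l h3 hl
      exact ⟨y, hy, hsub.cons₂ c⟩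

theorem count_phiA (b : ℕ) (hb : 2 ≤ b) : ∀ (π : List ℕ) (M : ℕ), CanonA M π →
    (phiA M π).count b =
      (if M < b ∧ b ≤ π.foldl max M then 1 else 0) + lateCt M (b - 1) π := by
  intro π
  induction π with
  | nil =>
    intro M _
    simp only [phiA, lateCt, List.foldl, List.count_nil]
    have hn : ¬ (M < b ∧ b ≤ M) := by omega
    simp [hn]
  | cons c l ih =>
    intro M hc
    rw [canonA_cons] at hc
    obtain ⟨h1, h2, h3⟩ := hc
    rw [phiA_cons, lateCt_cons]
    simp only [List.count_cons, beq_iff_eq]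
    have hF : max M c ≤ l.foldl max (max M c) := le_foldl_max l (max M c)
    have hfold : (c :: l).foldl max M = l.foldl max (max M c) := rfl
    rw [hfold]
    rcases Nat.lt_trichotomy c M with hlt | he | hgt
    · have e1 : c ≠ M + 1 := by omega
      have e2 : c ≠ M := by omega
      rw [if_neg e1, if_neg e2]
      have hm : max M c = M := by omega
      rw [hm] at h3 hF ⊢
      rw [ih M h3]
      split_ifs <;> omega
    · subst he
      have e1 : c ≠ c + 1 := by omega
      rw [if_neg e1, if_pos rfl]
      have hm : max c c = c := by omega
      rw [hm] at h3 hF ⊢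
      rw [ih c h3]
      split_ifs <;> omega
    · have e1 : c = M + 1 := by omega
      subst e1
      rw [if_pos rfl]
      have hm : max M (M + 1) = M + 1 := by omega
      rw [hm] at h3 hF ⊢
      rw [ih (M + 1) h3]
      split_ifs <;> omega

theorem get_cons_rep (x y m : ℕ) : ∀ (i : ℕ) (h : i < (x :: List.replicate m y).length),
    (x :: List.replicate m y).get ⟨i, h⟩ = if i = 0 then x else y := by
  intro i h
  match i with
  | 0 => rfl
  | j + 1 =>
    rw [if_neg (by omega)]
    simp only [List.get_eq_getElem, List.getElem_cons_succ]
    have hj : j < m := by simpa using h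
    simp [List.getElem_replicate]

theorem get_cons_cons_rep (x y z r : ℕ) :
    ∀ (i : ℕ) (h : i < (x :: y :: List.replicate r z).length),
    (x :: y :: List.replicate r z).get ⟨i, h⟩ =
      if i = 0 then x else if i = 1 then y else z := by
  intro i h
  match i with
  | 0 => rfl
  | 1 => rfl
  | j + 2 =>
    rw [if_neg (by omega), if_neg (by omega)]
    simp only [List.get_eq_getElem, List.getElem_cons_succ]
    simp [List.getElem_replicate]

theorem containsA_iff (π : List ℕ) (m : ℕ) (hm : 1 ≤ m) :
    ContainsPat π (1 :: List.replicate m 2) ↔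
      ∃ x y, x < y ∧ (x :: List.replicate m y).Sublist π := by
  constructor
  · rintro ⟨f, hf, hiff⟩
    have heq : ∀ i j, (1 :: List.replicate m 2).get i = (1 :: List.replicate m 2).get j →
        π.get (f i) = π.get (f j) := by
      intro i j he
      have a1 : ¬ π.get (f i) < π.get (f j) := fun h => by
        have := (hiff i j).mpr h; omega
      have a2 : ¬ π.get (f j) < π.get (f i) := fun h => by
        have := (hiff j i).mpr h; omega
      omega
    have hL : (1 :: List.replicate m 2).length = m + 1 := by simp
    have h0 : 0 < (1 :: List.replicate m 2).length := by omega
    have h1 : 1 < (1 :: List.replicate m 2).length := by omega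
    set i0 : Fin (1 :: List.replicate m 2).length := ⟨0, h0⟩ with hi0
    set i1 : Fin (1 :: List.replicate m 2).length := ⟨1, h1⟩ with hi1
    have g0 : (1 :: List.replicate m 2).get i0 = 1 := by
      rw [hi0, get_cons_rep]; simp
    have g1 : (1 :: List.replicate m 2).get i1 = 2 := by
      rw [hi1, get_cons_rep]; simp
    have hxy : π.get (f i0) < π.get (f i1) := (hiff i0 i1).mp (by rw [g0, g1]; omega)
    have hval : ∀ i, i.1 ≠ 0 → π.get (f i) = π.get (f i1) := by
      intro i hi
      apply heq
      have gi : (1 :: List.replicate m 2).get i = if i.1 = 0 then 1 else 2 :=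
        get_cons_rep 1 2 m i.1 i.2
      rw [gi, if_neg hi, g1]
    refine ⟨π.get (f i0), π.get (f i1), hxy, ?_⟩
    rw [List.sublist_iff_exists_fin_orderEmbedding_get_eq]
    have hc : (π.get (f i0) :: List.replicate m (π.get (f i1))).length =
        (1 :: List.replicate m 2).length := by simp
    refine ⟨OrderEmbedding.ofStrictMono (fun ix => f (Fin.cast hc ix)) ?_, ?_⟩
    · intro a b hab
      exact hf (by rw [Fin.lt_def, Fin.coe_cast, Fin.coe_cast]; exact hab)
    · intro ix
      show _ = π.get (f (Fin.cast hc ix))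
      have hx : (π.get (f i0) :: List.replicate m (π.get (f i1))).get ix =
          if ix.1 = 0 then π.get (f i0) else π.get (f i1) :=
        get_cons_rep _ _ m ix.1 ix.2
      rw [hx]
      by_cases h : ix.1 = 0
      · rw [if_pos h]
        have : Fin.cast hc ix = i0 := Fin.ext (by rw [Fin.coe_cast]; exact h)
        rw [this]
      · rw [if_neg h]
        exact (hval (Fin.cast hc ix) (by rw [Fin.coe_cast]; exact h)).symm
  · rintro ⟨x, y, hxy, hsub⟩
    rw [List.sublist_iff_exists_fin_orderEmbedding_get_eq] at hsub
    obtain ⟨g, hg⟩ := hsub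
    have hc : (1 :: List.replicate m 2).length = (x :: List.replicate m y).length := by simp
    refine ⟨fun i => g (Fin.cast hc i), ?_, ?_⟩
    · intro a b hab
      exact g.strictMono (by rw [Fin.lt_def, Fin.coe_cast, Fin.coe_cast]; exact hab)
    · intro i j
      have e1 : π.get (g (Fin.cast hc i)) = if i.1 = 0 then x else y := by
        rw [← hg]; exact get_cons_rep x y m i.1 (Fin.cast hc i).2
      have e2 : π.get (g (Fin.cast hc j)) = if j.1 = 0 then x else y := by
        rw [← hg]; exact get_cons_rep x y m j.1 (Fin.cast hc j).2
      have e3 : (1 :: List.replicate m 2).get i = if i.1 = 0 then 1 else 2 :=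
        get_cons_rep 1 2 m i.1 i.2
      have e4 : (1 :: List.replicate m 2).get j = if j.1 = 0 then 1 else 2 :=
        get_cons_rep 1 2 m j.1 j.2
      rw [e1, e2, e3, e4]
      split_ifs <;> omega

theorem containsB_iff (π : List ℕ) (r : ℕ) (hr : 1 ≤ r) :
    ContainsPat π (1 :: 2 :: List.replicate r 1) ↔
      ∃ x y, x < y ∧ (x :: y :: List.replicate r x).Sublist π := by
  constructor
  · rintro ⟨f, hf, hiff⟩
    have heq : ∀ i j, (1 :: 2 :: List.replicate r 1).get i = (1 :: 2 :: List.replicate r 1).get j →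
        π.get (f i) = π.get (f j) := by
      intro i j he
      have a1 : ¬ π.get (f i) < π.get (f j) := fun h => by
        have := (hiff i j).mpr h; omega
      have a2 : ¬ π.get (f j) < π.get (f i) := fun h => by
        have := (hiff j i).mpr h; omega
      omega
    have hL : (1 :: 2 :: List.replicate r 1).length = r + 2 := by simp
    have h0 : 0 < (1 :: 2 :: List.replicate r 1).length := by omega
    have h1 : 1 < (1 :: 2 :: List.replicate r 1).length := by omega
    set i0 : Fin (1 :: 2 :: List.replicate r 1).length := ⟨0, h0⟩ with hi0
    set i1 : Fin (1 :: 2 :: List.replicate r 1).length := ⟨1, h1⟩ with hi1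
    have g0 : (1 :: 2 :: List.replicate r 1).get i0 = 1 := by
      rw [hi0, get_cons_cons_rep]; simp
    have g1 : (1 :: 2 :: List.replicate r 1).get i1 = 2 := by
      rw [hi1, get_cons_cons_rep]; simp
    have hxy : π.get (f i0) < π.get (f i1) := (hiff i0 i1).mp (by rw [g0, g1]; omega)
    have hval : ∀ i, i.1 ≠ 1 → π.get (f i) = π.get (f i0) := by
      intro i hi
      apply heq
      have gi : (1 :: 2 :: List.replicate r 1).get i =
          if i.1 = 0 then 1 else if i.1 = 1 then 2 else 1 :=
        get_cons_cons_rep 1 2 1 r i.1 i.2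
      rw [gi, g0]
      split_ifs <;> omega
    refine ⟨π.get (f i0), π.get (f i1), hxy, ?_⟩
    rw [List.sublist_iff_exists_fin_orderEmbedding_get_eq]
    have hc : (π.get (f i0) :: π.get (f i1) :: List.replicate r (π.get (f i0))).length =
        (1 :: 2 :: List.replicate r 1).length := by simp
    refine ⟨OrderEmbedding.ofStrictMono (fun ix => f (Fin.cast hc ix)) ?_, ?_⟩
    · intro a b hab
      exact hf (by rw [Fin.lt_def, Fin.coe_cast, Fin.coe_cast]; exact hab)
    · intro ix
      show _ = π.get (f (Fin.cast hc ix))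
      have hx : (π.get (f i0) :: π.get (f i1) :: List.replicate r (π.get (f i0))).get ix =
          if ix.1 = 0 then π.get (f i0) else if ix.1 = 1 then π.get (f i1) else π.get (f i0) :=
        get_cons_cons_rep _ _ _ r ix.1 ix.2
      rw [hx]
      by_cases h : ix.1 = 1
      · rw [if_neg (by omega), if_pos h]
        have : Fin.cast hc ix = i1 := Fin.ext (by rw [Fin.coe_cast]; exact h)
        rw [this]
      · have hsym := (hval (Fin.cast hc ix) (by rw [Fin.coe_cast]; exact h)).symm
        split_ifs <;> exact hsym
  · rintro ⟨x, y, hxy, hsub⟩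
    rw [List.sublist_iff_exists_fin_orderEmbedding_get_eq] at hsub
    obtain ⟨g, hg⟩ := hsub
    have hc : (1 :: 2 :: List.replicate r 1).length = (x :: y :: List.replicate r x).length := by
      simp
    refine ⟨fun i => g (Fin.cast hc i), ?_, ?_⟩
    · intro a b hab
      exact g.strictMono (by rw [Fin.lt_def, Fin.coe_cast, Fin.coe_cast]; exact hab)
    · intro i j
      have e1 : π.get (g (Fin.cast hc i)) = if i.1 = 0 then x else if i.1 = 1 then y else x := by
        rw [← hg]; exact get_cons_cons_rep x y x r i.1 (Fin.cast hc i).2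
      have e2 : π.get (g (Fin.cast hc j)) = if j.1 = 0 then x else if j.1 = 1 then y else x := by
        rw [← hg]; exact get_cons_cons_rep x y x r j.1 (Fin.cast hc j).2
      have e3 : (1 :: 2 :: List.replicate r 1).get i =
          if i.1 = 0 then 1 else if i.1 = 1 then 2 else 1 :=
        get_cons_cons_rep 1 2 1 r i.1 i.2
      have e4 : (1 :: 2 :: List.replicate r 1).get j =
          if j.1 = 0 then 1 else if j.1 = 1 then 2 else 1 :=
        get_cons_cons_rep 1 2 1 r j.1 j.2
      rw [e1, e2, e3, e4]
      split_ifs <;> omega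

theorem containsA_count (π : List ℕ) (m : ℕ) (hm : 1 ≤ m) (hc : CanonA 0 π) :
    ContainsPat π (1 :: List.replicate m 2) ↔ ∃ b, 2 ≤ b ∧ m ≤ π.count b := by
  rw [containsA_iff π m hm]
  constructor
  · rintro ⟨x, y, hxy, hsub⟩
    have hxmem : x ∈ π := hsub.subset (by simp)
    have hx1 : 1 ≤ x := canon_mem_ge_one π 0 hc x hxmem
    refine ⟨y, by omega, ?_⟩
    have hs2 : (List.replicate m y).Sublist π := (List.sublist_cons_self x _).trans hsub
    have := hs2.count_le y
    simpa [List.count_replicate] using this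
  · rintro ⟨b, hb, hcount⟩
    cases π with
    | nil => simp at hcount; omega
    | cons c t =>
      rw [canonA_cons] at hc
      have hc1 : c = 1 := by omega
      subst hc1
      have hcb : (1 : ℕ) ≠ b := by omega
      have hct : m ≤ t.count b := by
        rw [List.count_cons, if_neg (by simpa using hcb)] at hcount
        omega
      have hrep : (List.replicate m b).Sublist t :=
        List.replicate_sublist_iff.mpr hct
      exact ⟨1, b, by omega, hrep.cons₂ 1⟩

theorem containsB_late (π : List ℕ) (r : ℕ) (hr : 1 ≤ r) (hc : CanonA 0 π) :
    ContainsPat π (1 :: 2 :: List.replicate r 1) ↔ ∃ a, r ≤ lateCt 0 a π := by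
  rw [containsB_iff π r hr]
  constructor
  · rintro ⟨x, y, hxy, hsub⟩
    exact ⟨x, B_sub_late r x y hxy π 0 hsub⟩
  · rintro ⟨a, ha⟩
    have ha1 : 1 ≤ a := by
      by_contra h
      have h0 : a = 0 := by omega
      subst h0
      have h1 := lateCt_le_count π 0 0
      have h2 := canon_count_zero π 0 hc
      omega
    obtain ⟨y, hy, hsub⟩ := mainB r a hr π 0 hc (by omega) ha
    exact ⟨a, y, hy, hsub⟩

theorem avoid_equiv (π : List ℕ) (r : ℕ) (hr : 1 ≤ r) (hc : CanonA 0 π) :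
    AvoidsPat π (1 :: 2 :: List.replicate r 1) ↔
      AvoidsPat (phiA 0 π) (1 :: List.replicate (r + 1) 2) := by
  unfold AvoidsPat
  rw [containsB_late π r hr hc,
    containsA_count (phiA 0 π) (r + 1) (by omega) (phiA_canon π 0 hc)]
  apply not_congr
  constructor
  · rintro ⟨a, ha⟩
    have ha1 : 1 ≤ a := by
      by_contra h
      have h0 : a = 0 := by omega
      subst h0
      have h1 := lateCt_le_count π 0 0
      have h2 := canon_count_zero π 0 hc
      omega
    have haf : a < π.foldl max 0 := by
      by_contra h
      push_neg at h
      rw [lateCt_eq_zero π 0 h] at ha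
      omega
    refine ⟨a + 1, by omega, ?_⟩
    rw [count_phiA (a + 1) (by omega) π 0 hc, if_pos ⟨by omega, by omega⟩]
    have he : a + 1 - 1 = a := by omega
    rw [he]
    omega
  · rintro ⟨b, hb, hcount⟩
    rw [count_phiA b hb π 0 hc] at hcount
    refine ⟨b - 1, ?_⟩
    split_ifs at hcount <;> omega

end S9

/-- For every m ≥ 1, the pattern 12^m is equivalent to the
pattern 121^(m−1). -/
theorem statement9 (m : ℕ) (hm : 1 ≤ m) :
    PatEquiv (1 :: List.replicate m 2) (1 :: 2 :: List.replicate (m - 1) 1) := by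
  intro n
  rcases Nat.lt_or_ge m 2 with h2 | h2
  · have hm1 : m = 1 := by omega
    subst hm1
    rfl
  · obtain ⟨r, hrm⟩ : ∃ r, m = r + 1 := ⟨m - 1, by omega⟩
    subst hrm
    have hr : 1 ≤ r := by omega
    have hred : r + 1 - 1 = r := by omega
    rw [hred]
    unfold pAvoid
    have himg : {π : List ℕ | π.length = n ∧ IsCanonicalSeq π ∧
        AvoidsPat π (1 :: List.replicate (r + 1) 2)} =
        (S9.phiA 0) '' {π : List ℕ | π.length = n ∧ IsCanonicalSeq π ∧
          AvoidsPat π (1 :: 2 :: List.replicate r 1)} := by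
      ext τ
      simp only [Set.mem_setOf_eq, Set.mem_image]
      constructor
      · rintro ⟨hlen, hcan, hav⟩
        have hc : S9.CanonA 0 τ := (S9.isCanonical_iff τ).mp hcan
        refine ⟨S9.psiA 0 τ, ⟨?_, ?_, ?_⟩, S9.phiA_psiA τ 0 hc⟩
        · rw [S9.psiA_length]; exact hlen
        · exact (S9.isCanonical_iff _).mpr (S9.psiA_canon τ 0 hc)
        · have hcpsi : S9.CanonA 0 (S9.psiA 0 τ) := S9.psiA_canon τ 0 hc
          rw [S9.avoid_equiv (S9.psiA 0 τ) r hr hcpsi, S9.phiA_psiA τ 0 hc]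
          exact hav
      · rintro ⟨π, ⟨hlen, hcan, hav⟩, rfl⟩
        have hc : S9.CanonA 0 π := (S9.isCanonical_iff π).mp hcan
        exact ⟨by rw [S9.phiA_length]; exact hlen,
          (S9.isCanonical_iff _).mpr (S9.phiA_canon π 0 hc),
          (S9.avoid_equiv π r hr hc).mp hav⟩
    rw [himg, Set.ncard_image_of_injOn]
    intro π₁ h₁ π₂ h₂ he
    simp only [Set.mem_setOf_eq] at h₁ h₂
    have c1 : S9.CanonA 0 π₁ := (S9.isCanonical_iff π₁).mp h₁.2.1
    have c2 : S9.CanonA 0 π₂ := (S9.isCanonical_iff π₂).mp h₂.2.1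
    rw [← S9.psiA_phiA π₁ 0 c1, ← S9.psiA_phiA π₂ 0 c2, he]
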